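/- Let 0 < d₁ < d₂ be integers and let f ∈ W^{1,1}(𝕊¹;𝕊¹) with deg f = d₁ satisfy f ∧ f' ≥ 0 almost everywhere. Then ∫_{𝕊¹}|f' - g'| ≥ 2π(d₂ - d₁) for every g ∈ W^{1,1}(𝕊¹;𝕊¹) with deg g = d₂. -/

import Mathlib

open Real MeasureTheory


lemma norm_aux (x y : ℝ) :
    ‖Complex.I * (x : ℂ) * Complex.exp (Complex.I * (y : ℂ))‖ = |x| := by
  simp [map_mul, Complex.norm_exp]

lemma phase_cont (φ φ' : ℝ → ℝ) (hint : ∀ a b : ℝ, IntervalIntegrable φ' volume a b)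
    (hftc : ∀ a b : ℝ, φ b - φ a = ∫ t in a..b, φ' t) : Continuous φ := by
  have : φ = fun t => φ 0 + ∫ s in (0:ℝ)..t, φ' s := by
    funext t; have := hftc 0 t; linarith
  rw [this]
  exact continuous_const.add (intervalIntegral.continuous_primitive hint 0)

lemma F_intble (φ φ' : ℝ → ℝ) (hint : ∀ a b : ℝ, IntervalIntegrable φ' volume a b)
    (hcont : Continuous φ) :
    IntervalIntegrable
      (fun θ => Complex.I * (φ' θ : ℂ) * Complex.exp (Complex.I * (φ θ : ℂ)))
      volume 0 (2 * π) := by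
  have hle : (0:ℝ) ≤ 2 * π := by positivity
  have h1 := hint 0 (2 * π)
  rw [intervalIntegrable_iff_integrableOn_Ioc_of_le hle] at *
  have hc : Continuous fun θ => Complex.exp (Complex.I * (φ θ : ℂ)) :=
    Complex.continuous_exp.comp (continuous_const.mul (Complex.continuous_ofReal.comp hcont))
  have hm : AEStronglyMeasurable
      (fun θ => Complex.I * (φ' θ : ℂ) * Complex.exp (Complex.I * (φ θ : ℂ)))
      (volume.restrict (Set.Ioc 0 (2 * π))) :=
    ((Complex.continuous_ofReal.comp_aestronglyMeasurable
      h1.aestronglyMeasurable).const_mul Complex.I).mul hc.aestronglyMeasurable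
  exact h1.norm.mono' hm (by filter_upwards with θ; simp only [norm_aux, Real.norm_eq_abs]; exact le_rfl)


/-- `f = e^{iφ}` is a `W^{1,1}` map `𝕊¹ → 𝕊¹` of degree `d`, with phase `φ` and integrable
weak derivative `φ'` of the phase. Note `f ∧ f' = φ'` pointwise a.e. -/
def MemE (d : ℤ) (φ φ' : ℝ → ℝ) : Prop :=
  (∀ θ : ℝ, φ (θ + 2 * π) = φ θ + 2 * π * d) ∧
  (∀ a b : ℝ, IntervalIntegrable φ' volume a b) ∧
  (∀ a b : ℝ, φ b - φ a = ∫ t in a..b, φ' t)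

/-- The `W^{1,1}` seminorm distance `∫_{𝕊¹} |f' - g'|`. -/
noncomputable def dist11 (φ φ' ψ ψ' : ℝ → ℝ) : ℝ :=
  ∫ θ in (0:ℝ)..(2 * π),
    ‖Complex.I * (φ' θ : ℂ) * Complex.exp (Complex.I * (φ θ : ℂ)) -
      Complex.I * (ψ' θ : ℂ) * Complex.exp (Complex.I * (ψ θ : ℂ))‖

theorem stmt7' (d₁ d₂ : ℤ) (h₁ : 0 < d₁) (h₂ : d₁ < d₂) (φ φ' : ℝ → ℝ)
    (hφ : (∀ θ : ℝ, φ (θ + 2 * π) = φ θ + 2 * π * d₁) ∧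
      (∀ a b : ℝ, IntervalIntegrable φ' volume a b) ∧
      (∀ a b : ℝ, φ b - φ a = ∫ t in a..b, φ' t))
    (hpos : ∀ᵐ θ ∂(volume : Measure ℝ), θ ∈ Set.Ioo 0 (2 * π) → 0 ≤ φ' θ)
    (ψ ψ' : ℝ → ℝ)
    (hψ : (∀ θ : ℝ, ψ (θ + 2 * π) = ψ θ + 2 * π * d₂) ∧
      (∀ a b : ℝ, IntervalIntegrable ψ' volume a b) ∧
      (∀ a b : ℝ, ψ b - ψ a = ∫ t in a..b, ψ' t)) :
    2 * π * ((d₂ : ℝ) - (d₁ : ℝ)) ≤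
      ∫ θ in (0:ℝ)..(2 * π),
        ‖Complex.I * (φ' θ : ℂ) * Complex.exp (Complex.I * (φ θ : ℂ)) -
          Complex.I * (ψ' θ : ℂ) * Complex.exp (Complex.I * (ψ θ : ℂ))‖ := by
  obtain ⟨hper, hint, hftc⟩ := hφ
  obtain ⟨hper', hint', hftc'⟩ := hψ
  have hle : (0:ℝ) ≤ 2 * π := by positivity
  have hcφ := phase_cont φ φ' hint hftc
  have hcψ := phase_cont ψ ψ' hint' hftc'
  set F := fun θ => Complex.I * (φ' θ : ℂ) * Complex.exp (Complex.I * (φ θ : ℂ)) with hFdef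
  set G := fun θ => Complex.I * (ψ' θ : ℂ) * Complex.exp (Complex.I * (ψ θ : ℂ)) with hGdef
  have hF := F_intble φ φ' hint hcφ
  have hG := F_intble ψ ψ' hint' hcψ
  have eφ : ∫ t in (0:ℝ)..(2 * π), φ' t = 2 * π * d₁ := by
    have h := hftc 0 (2 * π); have h0 := hper 0; rw [zero_add] at h0; linarith
  have eψ : ∫ t in (0:ℝ)..(2 * π), ψ' t = 2 * π * d₂ := by
    have h := hftc' 0 (2 * π); have h0 := hper' 0; rw [zero_add] at h0; linarith
  have habs : ∫ t in (0:ℝ)..(2 * π), |φ' t| = 2 * π * d₁ := by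
    rw [← eφ]
    apply intervalIntegral.integral_congr_ae
    have hne : ∀ᵐ θ : ℝ ∂volume, θ ≠ 2 * π := by
      rw [ae_iff]
      convert Real.volume_singleton (a := 2 * π) using 2
      ext x; simp
    filter_upwards [hpos, hne] with θ hθ hθne hmem
    rw [Set.uIoc_of_le hle] at hmem
    exact abs_of_nonneg (hθ ⟨hmem.1, lt_of_le_of_ne hmem.2 hθne⟩)
  have hψabs : 2 * π * d₂ ≤ ∫ t in (0:ℝ)..(2 * π), |ψ' t| := by
    rw [← eψ]
    exact intervalIntegral.integral_mono_on hle (hint' 0 _) (hint' 0 _).abs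
      (fun x _ => le_abs_self _)
  have key : ∫ θ in (0:ℝ)..(2 * π), (|ψ' θ| - |φ' θ|) ≤
      ∫ θ in (0:ℝ)..(2 * π), ‖F θ - G θ‖ := by
    apply intervalIntegral.integral_mono_on hle
      ((hint' 0 _).abs.sub (hint 0 _).abs) ((hF.sub hG).norm)
    intro x _
    have h1 : ‖G x‖ - ‖F x‖ ≤ ‖F x - G x‖ := by
      have := norm_sub_norm_le (G x) (F x)
      rwa [norm_sub_rev] at this
    have h2 : |ψ' x| - |φ' x| = ‖G x‖ - ‖F x‖ := by
      simp only [hFdef, hGdef, norm_aux]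
    rw [h2]; exact h1
  have hsub : ∫ θ in (0:ℝ)..(2 * π), (|ψ' θ| - |φ' θ|) =
      (∫ t in (0:ℝ)..(2 * π), |ψ' t|) - ∫ t in (0:ℝ)..(2 * π), |φ' t| :=
    intervalIntegral.integral_sub (hint' 0 _).abs (hint 0 _).abs
  have : 2 * π * ((d₂ : ℝ) - (d₁ : ℝ)) = 2 * π * d₂ - 2 * π * d₁ := by ring
  linarith [key, hsub, habs, hψabs]

/-- If `0 < d₁ < d₂` and `f ∈ E_{d₁}` satisfies `f ∧ f' ≥ 0` a.e. (i.e. `φ' ≥ 0` a.e. on a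
period), then `∫ |f' - g'| ≥ 2π(d₂ - d₁)` for every `g ∈ E_{d₂}`. -/
theorem stmt7 (d₁ d₂ : ℤ) (h₁ : 0 < d₁) (h₂ : d₁ < d₂) (φ φ' : ℝ → ℝ)
    (hφ : MemE d₁ φ φ')
    (hpos : ∀ᵐ θ ∂(volume : Measure ℝ), θ ∈ Set.Ioo 0 (2 * π) → 0 ≤ φ' θ)
    (ψ ψ' : ℝ → ℝ) (hψ : MemE d₂ ψ ψ') :
    2 * π * ((d₂ : ℝ) - (d₁ : ℝ)) ≤ dist11 φ φ' ψ ψ' := by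
  exact stmt7' d₁ d₂ h₁ h₂ φ φ' hφ hpos ψ ψ' hψ
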